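/- No nondisjunctive nested program is strongly equivalent to the program { p;q } consisting of the single rule with head the disjunction p;q and body ⊤, where p and q are distinct atoms. -/
import Mathlib


open scoped Classical

inductive Lit where
  | pos : ℕ → Lit
  | neg : ℕ → Lit
deriving DecidableEq

inductive Fml where
  | bot : Fml
  | top : Fml
  | lit : Lit → Fml
  | not : Fml → Fml
  | conj : Fml → Fml → Fml
  | disj : Fml → Fml → Fml
deriving DecidableEq

structure Rule where
  head : Fml
  body : Fml
deriving DecidableEq

abbrev Prog := Set Rule

/-- A set of literals is consistent if it contains no complementary pair. -/
def Consistent (X : Set Lit) : Prop :=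
  ∀ a : ℕ, ¬ (Lit.pos a ∈ X ∧ Lit.neg a ∈ X)

def Sat (X : Set Lit) : Fml → Prop
  | Fml.bot => False
  | Fml.top => True
  | Fml.lit l => l ∈ X
  | Fml.not F => ¬ Sat X F
  | Fml.conj F G => Sat X F ∧ Sat X G
  | Fml.disj F G => Sat X F ∨ Sat X G

def SatRule (X : Set Lit) (r : Rule) : Prop := Sat X r.body → Sat X r.head

def SatProg (X : Set Lit) (P : Prog) : Prop := ∀ r ∈ P, SatRule X r

/-- The reduct of a formula relative to X. -/
noncomputable def Reduct (X : Set Lit) : Fml → Fml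
  | Fml.bot => Fml.bot
  | Fml.top => Fml.top
  | Fml.lit l => Fml.lit l
  | Fml.not F => if Sat X F then Fml.bot else Fml.top
  | Fml.conj F G => Fml.conj (Reduct X F) (Reduct X G)
  | Fml.disj F G => Fml.disj (Reduct X F) (Reduct X G)

noncomputable def ReductRule (X : Set Lit) (r : Rule) : Rule :=
  ⟨Reduct X r.head, Reduct X r.body⟩

noncomputable def ReductProg (X : Set Lit) (P : Prog) : Prog :=
  ReductRule X '' P

/-- Y is an answer set for P: Y is minimal among consistent sets satisfying the reduct of P w.r.t. Y. -/
def AnswerSet (Y : Set Lit) (P : Prog) : Prop :=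
  Consistent Y ∧ SatProg Y (ReductProg Y P) ∧
    ∀ Z : Set Lit, Consistent Z → SatProg Z (ReductProg Y P) → Z ⊆ Y → Z = Y

def SEModel (P : Prog) (X Y : Set Lit) : Prop :=
  Consistent X ∧ Consistent Y ∧ X ⊆ Y ∧ SatProg Y P ∧ SatProg X (ReductProg Y P)

def StrongEq (P Q : Prog) : Prop :=
  ∀ R : Prog, ∀ Y : Set Lit, AnswerSet Y (P ∪ R) ↔ AnswerSet Y (Q ∪ R)

def Fml.negFree : Fml → Prop
  | Fml.bot => True
  | Fml.top => True
  | Fml.lit l => ∃ a, l = Lit.pos a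
  | Fml.not F => F.negFree
  | Fml.conj F G => F.negFree ∧ G.negFree
  | Fml.disj F G => F.negFree ∧ G.negFree

def ProgNegFree (P : Prog) : Prop := ∀ r ∈ P, r.head.negFree ∧ r.body.negFree

/-- The set of atoms (positive literals) in a set of literals. -/
def PosLits (Z : Set Lit) : Set Lit := {l ∈ Z | ∃ a, l = Lit.pos a}

def AtomsOnly (Z : Set Lit) : Prop := ∀ l ∈ Z, ∃ a, l = Lit.pos a

def Fml.elementary (F : Fml) : Prop :=
  F = Fml.bot ∨ F = Fml.top ∨ ∃ l : Lit, F = Fml.lit l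

def NdHead (F : Fml) : Prop :=
  F.elementary ∨ ∃ G : Fml, F = Fml.not G ∧ G.elementary

def Nondisjunctive (P : Prog) : Prop := ∀ r ∈ P, NdHead r.head

lemma sat_reduct_iff (Y : Set Lit) (F : Fml) : Sat Y (Reduct Y F) ↔ Sat Y F := by
  induction F with
  | bot => simp [Reduct, Sat]
  | top => simp [Reduct, Sat]
  | lit l => simp [Reduct]
  | not F ih => by_cases h : Sat Y F <;> simp [Reduct, Sat, h]
  | conj F G ihF ihG => simp only [Reduct, Sat, ihF, ihG]
  | disj F G ihF ihG => simp only [Reduct, Sat, ihF, ihG]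

lemma reduct_mono {X X' : Set Lit} (h : X ⊆ X') (Y : Set Lit) (F : Fml) :
    Sat X (Reduct Y F) → Sat X' (Reduct Y F) := by
  induction F with
  | bot => simp [Reduct, Sat]
  | top => simp [Reduct, Sat]
  | lit l => exact fun hl => h hl
  | not F ih => by_cases hc : Sat Y F <;> simp [Reduct, Sat, hc]
  | conj F G ihF ihG =>
      simp only [Reduct, Sat]
      exact fun hx => ⟨ihF hx.1, ihG hx.2⟩
  | disj F G ihF ihG =>
      simp only [Reduct, Sat]
      rintro (a | b)
      exacts [Or.inl (ihF a), Or.inr (ihG b)]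

lemma satProg_reduct_iff (X Y : Set Lit) (P : Prog) :
    SatProg X (ReductProg Y P) ↔ ∀ r ∈ P, SatRule X (ReductRule Y r) := by
  constructor
  · intro h r hr; exact h _ ⟨r, hr, rfl⟩
  · rintro h r' ⟨r, hr, rfl⟩; exact h r hr

/-- no nondisjunctive program is strongly equivalent to { p;q }. -/
theorem stmt10 (p q : ℕ) (hpq : p ≠ q) (P : Prog) (hP : Nondisjunctive P) :
    ¬ StrongEq P
        ({⟨Fml.disj (Fml.lit (Lit.pos p)) (Fml.lit (Lit.pos q)), Fml.top⟩} : Prog) := by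
  intro hSE
  set pl : Lit := Lit.pos p with hpl
  set ql : Lit := Lit.pos q with hql
  have hplql : pl ≠ ql := by simp [hpl, hql, hpq]
  set Y : Set Lit := {pl, ql} with hY
  set Qr : Rule := ⟨Fml.disj (Fml.lit pl) (Fml.lit ql), Fml.top⟩ with hQr
  have hYcons : Consistent Y := by
    rintro a ⟨_, hn⟩
    rcases hn with h | h <;> simp [hpl, hql] at h
  -- reduct of simple not-free rules
  have hred_lit : ∀ (a b : Lit), ReductRule Y ⟨Fml.lit a, Fml.lit b⟩ = ⟨Fml.lit a, Fml.lit b⟩ := by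
    intro a b; simp [ReductRule, Reduct]
  have hred_fact : ∀ (a : Lit), ReductRule Y ⟨Fml.lit a, Fml.top⟩ = ⟨Fml.lit a, Fml.top⟩ := by
    intro a; simp [ReductRule, Reduct]
  have hred_Qr : ReductRule Y Qr = Qr := by
    simp [ReductRule, Reduct, hQr]
  -- the program R1 = { p ← q, q ← p }
  set R1 : Prog := {⟨Fml.lit pl, Fml.lit ql⟩, ⟨Fml.lit ql, Fml.lit pl⟩} with hR1
  -- Step 1: Y is an answer set of Q ∪ R1
  have hQR1 : AnswerSet Y (({Qr} : Prog) ∪ R1) := by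
    refine ⟨hYcons, ?_, ?_⟩
    · rw [satProg_reduct_iff]
      rintro r (hr | hr)
      · rw [Set.mem_singleton_iff] at hr
        subst hr
        rw [hred_Qr]
        intro _
        exact Or.inl (Set.mem_insert _ _)
      · rcases hr with hr | hr <;> subst hr
        · rw [hred_lit]; intro _; exact Set.mem_insert _ _
        · rw [hred_lit]; intro _; exact Set.mem_insert_of_mem _ rfl
    · intro Z _ hZsat hZY
      rw [satProg_reduct_iff] at hZsat
      have h1 := hZsat Qr (Or.inl rfl)
      rw [hred_Qr] at h1
      have h2 := hZsat ⟨Fml.lit pl, Fml.lit ql⟩ (Or.inr (Or.inl rfl))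
      have h3 := hZsat ⟨Fml.lit ql, Fml.lit pl⟩ (Or.inr (Or.inr rfl))
      rw [hred_lit] at h2 h3
      have hdisj : Sat Z (Fml.disj (Fml.lit pl) (Fml.lit ql)) := h1 trivial
      have hboth : pl ∈ Z ∧ ql ∈ Z := by
        rcases hdisj with h | h
        · exact ⟨h, h3 h⟩
        · exact ⟨h2 h, h⟩
      apply Set.Subset.antisymm hZY
      intro l hl
      rcases hl with h | h
      · exact h ▸ hboth.1
      · rw [Set.mem_singleton_iff] at h; exact h ▸ hboth.2

  -- Step 2: Y is an answer set of P ∪ R1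
  have hPR1 : AnswerSet Y (P ∪ R1) := (hSE R1 Y).mpr hQR1
  -- hence Y satisfies the reduct of P w.r.t. Y
  have hYredP : ∀ r ∈ P, SatRule Y (ReductRule Y r) := by
    intro r hr
    exact hPR1.2.1 _ ⟨r, Or.inl hr, rfl⟩
  -- Step 3: {pl} and {ql} each satisfy the reduct of P w.r.t. Y
  have key : ∀ x y : Lit, x = pl ∧ y = ql ∨ x = ql ∧ y = pl →
      ∀ r ∈ P, SatRule ({x} : Set Lit) (ReductRule Y r) := by
    intro x y hxy
    by_contra hnot
    push_neg at hnot
    have hxY : ({x} : Set Lit) ⊆ Y := by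
      rcases hxy with ⟨hx, _⟩ | ⟨hx, _⟩ <;> subst hx <;> intro l hl <;>
          rw [Set.mem_singleton_iff] at hl <;> subst hl
      · exact Set.mem_insert _ _
      · exact Set.mem_insert_of_mem _ rfl
    have hxney : x ≠ y := by
      rcases hxy with ⟨hx, hy⟩ | ⟨hx, hy⟩ <;> subst hx <;> subst hy
      · exact hplql
      · exact hplql.symm
    have hyY : y ∈ Y := by
      rcases hxy with ⟨_, hy⟩ | ⟨_, hy⟩ <;> subst hy <;> simp [hY]
    -- R2 = { x ← ⊤ }
    set R2 : Prog := {⟨Fml.lit x, Fml.top⟩} with hR2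
    have hPR2 : AnswerSet Y (P ∪ R2) := by
      refine ⟨hYcons, ?_, ?_⟩
      · rw [satProg_reduct_iff]
        rintro r (hr | hr)
        · exact hYredP r hr
        · rw [Set.mem_singleton_iff] at hr; subst hr
          rw [hred_fact]
          intro _
          exact hxY rfl
      · intro Z hZcons hZsat hZY
        rw [satProg_reduct_iff] at hZsat
        have hx : x ∈ Z := by
          have h := hZsat ⟨Fml.lit x, Fml.top⟩ (Or.inr rfl)
          rw [hred_fact] at h
          exact h trivial
        by_cases hy : y ∈ Z
        · apply Set.Subset.antisymm hZY
          intro l hl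
          have : l = pl ∨ l = ql := by
            rcases hl with h | h
            · exact Or.inl h
            · exact Or.inr (Set.mem_singleton_iff.mp h)
          rcases hxy with ⟨hxe, hye⟩ | ⟨hxe, hye⟩ <;> rcases this with h | h <;>
            subst h <;> simp_all [Set.mem_insert_iff]
        · exfalso
          have hZeq : Z = ({x} : Set Lit) := by
            apply Set.Subset.antisymm
            · intro l hl
              have hlY := hZY hl
              have : l = pl ∨ l = ql := by
                rcases hlY with h | h
                · exact Or.inl h
                · exact Or.inr (Set.mem_singleton_iff.mp h)
              rcases hxy with ⟨hxe, hye⟩ | ⟨hxe, hye⟩ <;> rcases this with h | h <;>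
                subst h <;> simp_all
            · intro l hl
              rw [Set.mem_singleton_iff] at hl
              exact hl ▸ hx
          obtain ⟨r, hr, hnr⟩ := hnot
          exact hnr (hZeq ▸ hZsat r (Or.inl hr))
    have hQR2 : AnswerSet Y (({Qr} : Prog) ∪ R2) := (hSE R2 Y).mp hPR2
    -- but {x} refutes minimality for Q ∪ R2
    have hxcons : Consistent ({x} : Set Lit) := by
      rintro a ⟨h1, h2⟩
      rw [Set.mem_singleton_iff] at h1 h2
      rcases hxy with ⟨hx, _⟩ | ⟨hx, _⟩ <;> subst hx <;> simp_all [hpl, hql]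
    have hxsat : SatProg ({x} : Set Lit) (ReductProg Y (({Qr} : Prog) ∪ R2)) := by
      rw [satProg_reduct_iff]
      rintro r (hr | hr)
      · rw [Set.mem_singleton_iff] at hr; subst hr
        rw [hred_Qr]
        intro _
        rcases hxy with ⟨hx, _⟩ | ⟨hx, _⟩ <;> subst hx
        · exact Or.inl rfl
        · exact Or.inr rfl
      · rw [Set.mem_singleton_iff] at hr; subst hr
        rw [hred_fact]; intro _; exact rfl
    have := hQR2.2.2 ({x} : Set Lit) hxcons hxsat hxY
    have : y ∈ ({x} : Set Lit) := this ▸ hyY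
    exact hxney (Set.mem_singleton_iff.mp this).symm
  have hpRed : ∀ r ∈ P, SatRule ({pl} : Set Lit) (ReductRule Y r) :=
    key pl ql (Or.inl ⟨rfl, rfl⟩)
  have hqRed : ∀ r ∈ P, SatRule ({ql} : Set Lit) (ReductRule Y r) :=
    key ql pl (Or.inr ⟨rfl, rfl⟩)
  -- Step 4: ∅ satisfies the reduct of P w.r.t. Y (closure under intersection)
  have hemptyRed : ∀ r ∈ P, SatRule (∅ : Set Lit) (ReductRule Y r) := by
    intro r hr hbody0
    show Sat (∅ : Set Lit) (Reduct Y r.head)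
    have hbody : Sat (∅ : Set Lit) (Reduct Y r.body) := hbody0
    have hbp : Sat ({pl} : Set Lit) (Reduct Y r.body) :=
      reduct_mono (Set.empty_subset _) Y r.body hbody
    have hbq : Sat ({ql} : Set Lit) (Reduct Y r.body) :=
      reduct_mono (Set.empty_subset _) Y r.body hbody
    have hhp : Sat ({pl} : Set Lit) (Reduct Y r.head) := hpRed r hr hbp
    have hhq : Sat ({ql} : Set Lit) (Reduct Y r.head) := hqRed r hr hbq
    rcases hP r hr with hel | ⟨G, hG, _⟩
    · rcases hel with h | h | ⟨l, h⟩
      · rw [h] at hhp; exact absurd hhp (by simp [Reduct, Sat])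
      · rw [h]; simp [Reduct, Sat]
      · rw [h] at hhp hhq
        rw [h]
        exfalso
        simp only [Reduct, Sat, Set.mem_singleton_iff] at hhp hhq
        exact hplql (hhp ▸ hhq ▸ rfl)
    · rw [hG] at hhp ⊢
      by_cases hc : Sat Y G
      · simp only [Reduct, hc, if_true] at hhp
        exact absurd hhp (by simp [Sat])
      · simp only [Reduct, hc, if_false]
        trivial
  -- Step 5: ∅ refutes minimality of Y for P ∪ R1
  have hEsat : SatProg (∅ : Set Lit) (ReductProg Y (P ∪ R1)) := by
    rw [satProg_reduct_iff]
    rintro r (hr | hr)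
    · exact hemptyRed r hr
    · rcases hr with hr | hr <;> subst hr <;>
        rw [hred_lit] <;> intro h <;> exact absurd h (by simp [Sat])
  have hEcons : Consistent (∅ : Set Lit) := by rintro a ⟨h, _⟩; exact h
  have hEY := hPR1.2.2 ∅ hEcons hEsat (Set.empty_subset _)
  have : pl ∈ (∅ : Set Lit) := hEY ▸ (by simp [hY] : pl ∈ Y)
  exact this
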